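/- Fix integers p ≥ 2, 1 ≤ m < p, and n ≥ 1. Let D be the uniform distribution over the function class H = { Ψ(x) = 1(Σ_{i=1}^m σ_i(x_i) ≡ 0 mod p) : σ_1,...,σ_m ∈ S_p }, and let Σ_D(x,x') = E_{Ψ∼D}[Ψ(x)Ψ(x')] be the corresponding p^m × p^m covariance matrix. Then the sum of the n largest eigenvalues of Σ_D is at most p^{m−2} + (n/p)·exp((m−1)/(p−1)). -/

import Mathlib

open Finset Matrix

/-! ### Auxiliary permutation-counting lemmas -/

lemma exists_perm_pair {α : Type*} [DecidableEq α] {a b c d : α} (hab : a ≠ b) (hcd : c ≠ d) :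
    ∃ π : Equiv.Perm α, π a = c ∧ π b = d := by
  have h1 : Equiv.swap a c b ≠ c := by
    intro h
    have h2 : b = a := (Equiv.swap a c).injective (h.trans (Equiv.swap_apply_left a c).symm)
    exact hab h2.symm
  refine ⟨(Equiv.swap a c).trans (Equiv.swap (Equiv.swap a c b) d), ?_, ?_⟩
  · simp only [Equiv.trans_apply, Equiv.swap_apply_left]
    exact Equiv.swap_apply_of_ne_of_ne (Ne.symm h1) hcd
  · simp only [Equiv.trans_apply, Equiv.swap_apply_left]

lemma fiber2_congr {α : Type*} [Fintype α] [DecidableEq α] {x x' a b c d : α}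
    (π : Equiv.Perm α) (hac : π a = c) (hbd : π b = d) :
    (univ.filter fun σ : Equiv.Perm α => σ x = a ∧ σ x' = b).card
      = (univ.filter fun σ : Equiv.Perm α => σ x = c ∧ σ x' = d).card := by
  apply Finset.card_bij' (fun σ _ => σ.trans π) (fun τ _ => τ.trans π.symm)
  · intro σ _; ext y; simp
  · intro τ _; ext y; simp
  · intro σ hσ
    simp only [mem_filter, mem_univ, true_and] at hσ ⊢
    simp [Equiv.trans_apply, hσ.1, hσ.2, hac, hbd]
  · intro τ hτ
    simp only [mem_filter, mem_univ, true_and] at hτ ⊢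
    refine ⟨?_, ?_⟩
    · simp [Equiv.trans_apply, hτ.1, ← hac]
    · simp [Equiv.trans_apply, hτ.2, ← hbd]

lemma fiber1_congr {α : Type*} [Fintype α] [DecidableEq α] (x a c : α) :
    (univ.filter fun σ : Equiv.Perm α => σ x = a).card
      = (univ.filter fun σ : Equiv.Perm α => σ x = c).card := by
  apply Finset.card_bij' (fun σ _ => σ.trans (Equiv.swap a c))
    (fun τ _ => τ.trans (Equiv.swap a c).symm)
  · intro σ _; ext y; simp
  · intro τ _; ext y; simp
  · intro σ hσ
    simp only [mem_filter, mem_univ, true_and] at hσ ⊢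
    simp [Equiv.trans_apply, hσ]
  · intro τ hτ
    simp only [mem_filter, mem_univ, true_and] at hτ ⊢
    simp [Equiv.trans_apply, hτ]

lemma fiber1_card {α : Type*} [Fintype α] [DecidableEq α] (x a : α) :
    (univ.filter fun σ : Equiv.Perm α => σ x = a).card = Nat.factorial (Fintype.card α - 1) := by
  have hpos : 0 < Fintype.card α := Fintype.card_pos_iff.2 ⟨x⟩
  have hsum : (univ : Finset (Equiv.Perm α)).card
      = ∑ c : α, (univ.filter fun σ : Equiv.Perm α => σ x = c).card :=
    Finset.card_eq_sum_card_fiberwise (fun σ _ => mem_univ (σ x))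
  rw [Finset.card_univ, Fintype.card_perm] at hsum
  have hconst : ∀ c : α, (univ.filter fun σ : Equiv.Perm α => σ x = c).card
      = (univ.filter fun σ : Equiv.Perm α => σ x = a).card := fun c => fiber1_congr x c a
  rw [Finset.sum_congr rfl (fun c _ => hconst c), Finset.sum_const, Finset.card_univ,
    smul_eq_mul] at hsum
  have hfac : Fintype.card α * Nat.factorial (Fintype.card α - 1) = Nat.factorial (Fintype.card α) :=
    Nat.mul_factorial_pred hpos.ne'
  exact Nat.eq_of_mul_eq_mul_left hpos (by omega)

lemma fiber2_card {α : Type*} [Fintype α] [DecidableEq α] {x x' a b : α}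
    (hxx : x ≠ x') (hab : a ≠ b) :
    (univ.filter fun σ : Equiv.Perm α => σ x = a ∧ σ x' = b).card
      = Nat.factorial (Fintype.card α - 2) := by
  set N := Fintype.card α with hN
  have hN2 : 2 ≤ N := by
    have : ({a, b} : Finset α).card ≤ N := by
      simpa [hN] using Finset.card_le_univ ({a, b} : Finset α)
    rwa [Finset.card_pair hab] at this
  have hsum : (univ : Finset (Equiv.Perm α)).card
      = ∑ q ∈ (univ : Finset α).offDiag,
          (univ.filter fun σ : Equiv.Perm α => (σ x, σ x') = q).card :=
    Finset.card_eq_sum_card_fiberwise (fun σ _ =>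
      Finset.mem_offDiag.2 ⟨mem_univ _, mem_univ _, fun h => hxx (σ.injective h)⟩)
  have hconst : ∀ q ∈ (univ : Finset α).offDiag,
      (univ.filter fun σ : Equiv.Perm α => (σ x, σ x') = q).card
        = (univ.filter fun σ : Equiv.Perm α => σ x = a ∧ σ x' = b).card := by
    rintro ⟨c, d⟩ hq
    have hcd : c ≠ d := (Finset.mem_offDiag.1 hq).2.2
    obtain ⟨π, hπ1, hπ2⟩ := exists_perm_pair hcd hab
    have := fiber2_congr (x := x) (x' := x') π hπ1 hπ2
    rw [← this]
    congr 1
    apply Finset.filter_congr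
    intro σ _
    simp [Prod.ext_iff]
  rw [Finset.card_univ, Fintype.card_perm, Finset.sum_congr rfl hconst, Finset.sum_const,
    Finset.offDiag_card, Finset.card_univ, smul_eq_mul, ← hN] at hsum
  have h1 : N * N - N = N * (N - 1) := by
    rw [Nat.mul_sub, Nat.mul_one]
  have hfac : Nat.factorial N = (N * (N - 1)) * Nat.factorial (N - 2) := by
    have h2 : Nat.factorial N = N * Nat.factorial (N - 1) := (Nat.mul_factorial_pred (by omega)).symm
    have h3 : Nat.factorial (N - 1) = (N - 1) * Nat.factorial (N - 2) := by
      have : N - 2 = (N - 1) - 1 := by omega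
      rw [this]
      exact (Nat.mul_factorial_pred (by omega)).symm
    rw [h2, h3]; ring
  rw [hfac, h1] at hsum
  exact (Nat.eq_of_mul_eq_mul_left (Nat.mul_pos (by omega) (by omega)) hsum).symm

/-! ### Weight functions and the key counting identity -/

/-- weight function for difference variables -/
noncomputable def Wr (p : ℕ) (u v d : ZMod p) : ℝ :=
  if u = v then (if d = 0 then (Nat.factorial (p-1) : ℝ) else 0)
  else (if d = 0 then 0 else (Nat.factorial (p-2) : ℝ))

/-- weight function for pairs of values -/
noncomputable def Fc (p : ℕ) (u v a b : ZMod p) : ℝ :=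
  if u = v then (if a = b then (Nat.factorial (p-1) : ℝ) else 0)
  else (if a = b then 0 else (Nat.factorial (p-2) : ℝ))

noncomputable def phi (p k : ℕ) : ℝ :=
  (((p:ℝ)-1)^k + (-1)^k * ((p:ℝ)-1)) / ((p:ℝ) * ((p:ℝ)-1)^k)

lemma phi_zero {p : ℕ} (hp : 2 ≤ p) : phi p 0 = 1 := by
  have h0 : (p:ℝ) ≠ 0 := by positivity
  simp [phi]
  exact_mod_cast h0

lemma phi_succ {p : ℕ} (hp : 2 ≤ p) (k : ℕ) :
    ((p:ℝ)-1) * phi p (k+1) = 1 - phi p k := by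
  have h0 : (p:ℝ) ≠ 0 := by positivity
  have h1 : (p:ℝ) - 1 ≠ 0 := by
    have : (2:ℝ) ≤ (p:ℝ) := by exact_mod_cast hp
    nlinarith
  simp only [phi]
  field_simp
  ring

lemma cardNonzero {p : ℕ} [NeZero p] :
    ((univ : Finset (ZMod p)).filter fun d => ¬ d = 0).card = p - 1 := by
  have : (univ : Finset (ZMod p)).filter (fun d => ¬ d = 0) = univ.erase 0 := by
    ext d; simp [Finset.mem_erase, and_comm]
  rw [this, Finset.card_erase_of_mem (mem_univ _), Finset.card_univ, ZMod.card]

lemma facsub {p : ℕ} (hp : 2 ≤ p) :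
    (Nat.factorial (p-1) : ℝ) = ((p:ℝ) - 1) * (Nat.factorial (p-2) : ℝ) := by
  have h : Nat.factorial (p-1) = (p-1) * Nat.factorial (p-2) := by
    have h2 : p - 2 = (p-1) - 1 := by omega
    rw [h2]
    exact (Nat.mul_factorial_pred (by omega)).symm
  rw [h]
  push_cast [Nat.cast_sub (by omega : 1 ≤ p)]
  ring

lemma W1 {p : ℕ} [NeZero p] (hp : 2 ≤ p) (u v : ZMod p) :
    ∑ d : ZMod p, Wr p u v d = (Nat.factorial (p-1) : ℝ) := by
  by_cases h : u = v
  · simp [Wr, h]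
  · simp only [Wr, if_neg h]
    rw [Finset.sum_ite, Finset.sum_const, Finset.sum_const, cardNonzero]
    rw [smul_zero, zero_add, nsmul_eq_mul, facsub hp,
      Nat.cast_sub (by omega : 1 ≤ p), Nat.cast_one]

lemma Tot {p : ℕ} [NeZero p] (hp : 2 ≤ p) (m : ℕ) (x x' : Fin m → ZMod p) :
    ∑ d : Fin m → ZMod p, ∏ i, Wr p (x i) (x' i) (d i)
      = (Nat.factorial (p-1) : ℝ)^m := by
  have h := Finset.prod_univ_sum (fun _ : Fin m => (univ : Finset (ZMod p)))
    (fun i d => Wr p (x i) (x' i) d)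
  rw [Fintype.piFinset_univ] at h
  rw [← h]
  rw [Finset.prod_congr rfl (fun i _ => W1 hp (x i) (x' i)), Finset.prod_const, Finset.card_univ,
    Fintype.card_fin]
lemma Tzero {p : ℕ} [NeZero p] (hp : 2 ≤ p) :
    ∀ (m : ℕ) (x x' : Fin m → ZMod p),
    ∑ d : Fin m → ZMod p, (if (∑ i, d i) = 0 then (1:ℝ) else 0) * ∏ i, Wr p (x i) (x' i) (d i)
      = (Nat.factorial (p-1) : ℝ)^m * phi p (∑ i, if x i = x' i then 0 else 1) := by
  intro m
  induction m with
  | zero =>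
    intro x x'
    simp [phi_zero hp]
  | succ m IH =>
    intro x x'
    set F : ℝ := (Nat.factorial (p-1) : ℝ) with hF
    set C2 : ℝ := (Nat.factorial (p-2) : ℝ) with hC2
    have hre : ∑ d : Fin (m+1) → ZMod p,
        (if (∑ i, d i) = 0 then (1:ℝ) else 0) * ∏ i, Wr p (x i) (x' i) (d i)
        = ∑ c : ZMod p, ∑ e : Fin m → ZMod p,
            (if c + ∑ i, e i = 0 then (1:ℝ) else 0) *
            (Wr p (x 0) (x' 0) c * ∏ i : Fin m, Wr p (x i.succ) (x' i.succ) (e i)) := by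
      have h1 : ∑ d : Fin (m+1) → ZMod p,
          (if (∑ i, d i) = 0 then (1:ℝ) else 0) * ∏ i, Wr p (x i) (x' i) (d i)
          = ∑ ce : ZMod p × (Fin m → ZMod p),
              (if ce.1 + ∑ i, ce.2 i = 0 then (1:ℝ) else 0) *
              (Wr p (x 0) (x' 0) ce.1 * ∏ i : Fin m, Wr p (x i.succ) (x' i.succ) (ce.2 i)) := by
        apply Fintype.sum_equiv (Fin.consEquiv (fun _ => ZMod p)).symm
        intro d
        simp only [Fin.consEquiv_symm_apply]
        rw [Fin.sum_univ_succ (f := fun i => d i),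
          Fin.prod_univ_succ (f := fun i => Wr p (x i) (x' i) (d i))]
        simp [Fin.tail]
        by_cases hc : d 0 + ∑ i : Fin m, d i.succ = 0 <;> simp [hc]
      rw [h1, Fintype.sum_prod_type]
    rw [hre]
    have hks : (∑ i : Fin (m+1), if x i = x' i then (0:ℕ) else 1)
        = (if x 0 = x' 0 then (0:ℕ) else 1)
            + ∑ i : Fin m, (if x i.succ = x' i.succ then (0:ℕ) else 1) :=
      Fin.sum_univ_succ _
    set P : (Fin m → ZMod p) → ℝ :=
      fun e => ∏ i : Fin m, Wr p (x i.succ) (x' i.succ) (e i) with hP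
    by_cases hx0 : x 0 = x' 0
    · -- head agrees
      have hsum : ∀ c : ZMod p, c ≠ 0 → ∑ e : Fin m → ZMod p,
          (if c + ∑ i, e i = 0 then (1:ℝ) else 0) * (Wr p (x 0) (x' 0) c * P e) = 0 := by
        intro c hc
        apply Finset.sum_eq_zero
        intro e _
        simp [Wr, hx0, hc]
      rw [Finset.sum_eq_single 0 (fun c _ hc => hsum c hc) (fun h => absurd (mem_univ _) h)]
      have hW0 : Wr p (x 0) (x' 0) 0 = F := by simp [Wr, hx0, hF]
      have h2 : ∀ e : Fin m → ZMod p,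
          (if (0:ZMod p) + ∑ i, e i = 0 then (1:ℝ) else 0) * (Wr p (x 0) (x' 0) 0 * P e)
            = F * ((if (∑ i, e i) = 0 then (1:ℝ) else 0) * P e) := by
        intro e; rw [hW0, zero_add]; ring
      rw [Finset.sum_congr rfl (fun e _ => h2 e), ← Finset.mul_sum,
        IH (fun i => x i.succ) (fun i => x' i.succ), hks, if_pos hx0, zero_add]
      ring
    · -- head differs
      set G : ZMod p → ℝ :=
        fun s => ∑ e : Fin m → ZMod p, (if (∑ i, e i) = s then (1:ℝ) else 0) * P e with hG
      have hstep : ∀ c : ZMod p,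
          (∑ e : Fin m → ZMod p,
            (if c + ∑ i, e i = 0 then (1:ℝ) else 0) * (Wr p (x 0) (x' 0) c * P e))
          = (if c = 0 then (0:ℝ) else C2) * G (-c) := by
        intro c
        rw [hG, Finset.mul_sum]
        apply Finset.sum_congr rfl
        intro e _
        have heq : (c + ∑ i, e i = 0) ↔ ((∑ i, e i) = -c) := by
          constructor
          · intro h; exact eq_neg_of_add_eq_zero_right h
          · intro h; rw [h]; ring
        rw [Wr, if_neg hx0, if_congr heq rfl rfl]
        ring
      rw [Finset.sum_congr rfl (fun c _ => hstep c)]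
      have h3 : ∀ c : ZMod p, (if c = 0 then (0:ℝ) else C2) * G (-c)
          = C2 * G (-c) - (if c = 0 then C2 * G 0 else 0) := by
        intro c
        by_cases hc : c = 0
        · subst hc; simp
        · simp [hc]
      rw [Finset.sum_congr rfl (fun c _ => h3 c), Finset.sum_sub_distrib,
        Finset.sum_ite_eq' univ (0 : ZMod p) (fun _ => C2 * G 0), if_pos (mem_univ _)]
      have h4 : ∑ c : ZMod p, C2 * G (-c) = C2 * ∑ s : ZMod p, G s := by
        rw [← Finset.mul_sum]
        congr 1
        exact Fintype.sum_equiv (Equiv.neg (ZMod p)) (fun c => G (-c)) G (fun c => rfl)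
      have h5 : ∑ s : ZMod p, G s = F^m := by
        rw [hG, Finset.sum_comm]
        have h6 : ∀ e : Fin m → ZMod p,
            (∑ s : ZMod p, (if (∑ i, e i) = s then (1:ℝ) else 0) * P e) = P e := by
          intro e
          rw [← Finset.sum_mul, Finset.sum_ite_eq univ (∑ i, e i) (fun _ => (1:ℝ)),
            if_pos (mem_univ _), one_mul]
        rw [Finset.sum_congr rfl (fun e _ => h6 e)]
        exact Tot hp m _ _
      have h7 : G 0 = F^m * phi p (∑ i : Fin m, if x i.succ = x' i.succ then 0 else 1) :=
        IH (fun i => x i.succ) (fun i => x' i.succ)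
      rw [h4, h5, h7, hks, if_neg hx0]
      have h8 := phi_succ hp (∑ i : Fin m, if x i.succ = x' i.succ then (0:ℕ) else 1)
      have h9 : (1 : ℕ) + (∑ i : Fin m, if x i.succ = x' i.succ then (0:ℕ) else 1)
          = (∑ i : Fin m, if x i.succ = x' i.succ then (0:ℕ) else 1) + 1 := by ring
      have hFC : F = ((p:ℝ)-1) * C2 := by rw [hF, hC2]; exact facsub hp
      rw [h9, pow_succ]
      linear_combination (-(C2 * F^m)) * h8
        - (F^m * phi p ((∑ i : Fin m, if x i.succ = x' i.succ then (0:ℕ) else 1) + 1)) * hFC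
lemma colsum {p : ℕ} [NeZero p] (hp : 2 ≤ p) (u v a b : ZMod p) :
    ∑ τ : Equiv.Perm (ZMod p), (if τ u = a then (1:ℝ) else 0) * (if τ v = b then (1:ℝ) else 0)
      = Fc p u v a b := by
  have h1 : ∀ τ : Equiv.Perm (ZMod p),
      (if τ u = a then (1:ℝ) else 0) * (if τ v = b then (1:ℝ) else 0)
        = if (τ u = a ∧ τ v = b) then (1:ℝ) else 0 := by
    intro τ; by_cases h1 : τ u = a <;> by_cases h2 : τ v = b <;> simp [h1, h2]
  rw [Finset.sum_congr rfl (fun τ _ => h1 τ), Finset.sum_boole]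
  by_cases huv : u = v
  · subst huv
    by_cases hab : a = b
    · subst hab
      have : (univ.filter fun τ : Equiv.Perm (ZMod p) => τ u = a ∧ τ u = a)
          = univ.filter fun τ : Equiv.Perm (ZMod p) => τ u = a := by
        apply Finset.filter_congr; intro τ _; simp
      rw [this, fiber1_card, ZMod.card]
      simp [Fc]
    · have : (univ.filter fun τ : Equiv.Perm (ZMod p) => τ u = a ∧ τ u = b) = ∅ := by
        apply Finset.filter_false_of_mem
        rintro τ _ ⟨h1, h2⟩
        exact hab (h1 ▸ h2 ▸ rfl)
      rw [this]
      simp [Fc, hab]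
  · by_cases hab : a = b
    · subst hab
      have : (univ.filter fun τ : Equiv.Perm (ZMod p) => τ u = a ∧ τ v = a) = ∅ := by
        apply Finset.filter_false_of_mem
        rintro τ _ ⟨h1, h2⟩
        exact huv (τ.injective (h1.trans h2.symm))
      rw [this]
      simp [Fc, huv]
    · rw [fiber2_card huv hab, ZMod.card]
      simp [Fc, huv, hab]

lemma csum {p : ℕ} [NeZero p] {m : ℕ} (hm : 1 ≤ m) :
    ∑ a : Fin m → ZMod p, (if (∑ i, a i) = 0 then (1:ℝ) else 0) = (p:ℝ)^(m-1) := by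
  obtain ⟨m', rfl⟩ : ∃ m', m = m' + 1 := ⟨m - 1, by omega⟩
  have h1 : ∑ a : Fin (m'+1) → ZMod p, (if (∑ i, a i) = 0 then (1:ℝ) else 0)
      = ∑ ce : ZMod p × (Fin m' → ZMod p), (if ce.1 + ∑ i, ce.2 i = 0 then (1:ℝ) else 0) := by
    apply Fintype.sum_equiv (Fin.consEquiv (fun _ => ZMod p)).symm
    intro d
    simp only [Fin.consEquiv_symm_apply]
    rw [Fin.sum_univ_succ (f := fun i => d i)]
    simp [Fin.tail]
    exact if_congr Iff.rfl rfl rfl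
  rw [h1, Fintype.sum_prod_type_right]
  have h2 : ∀ e : Fin m' → ZMod p,
      (∑ c : ZMod p, if c + ∑ i, e i = 0 then (1:ℝ) else 0) = 1 := by
    intro e
    have : ∀ c : ZMod p, (if c + ∑ i, e i = 0 then (1:ℝ) else 0)
        = if c = -∑ i, e i then (1:ℝ) else 0 := by
      intro c
      congr 1
      apply propext
      constructor
      · intro h; exact eq_neg_of_add_eq_zero_left h
      · intro h; rw [h]; ring
    rw [Finset.sum_congr rfl (fun c _ => this c), Finset.sum_ite_eq' univ (-∑ i, e i) (fun _ => (1:ℝ)),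
      if_pos (mem_univ _)]
  rw [Finset.sum_congr rfl (fun e _ => h2 e), Finset.sum_const, Finset.card_univ]
  simp [Nat.add_sub_cancel]

lemma numerator {p : ℕ} [NeZero p] (hp : 2 ≤ p) {m : ℕ} (hm : 1 ≤ m) (x x' : Fin m → ZMod p) :
    ∑ σ : Fin m → Equiv.Perm (ZMod p),
        (if (∑ i, σ i (x i)) = 0 then (1 : ℝ) else 0) *
        (if (∑ i, σ i (x' i)) = 0 then (1 : ℝ) else 0)
      = (p:ℝ)^(m-1) * ((Nat.factorial (p-1) : ℝ)^m
          * phi p (∑ i, if x i = x' i then 0 else 1)) := by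
  classical
  set f : (Fin m → ZMod p) → ℝ := fun a => if (∑ i, a i) = 0 then (1:ℝ) else 0 with hf
  -- expand indicators over function values
  have hind : ∀ (g : Fin m → ZMod p),
      (if (∑ i, g i) = 0 then (1:ℝ) else 0) = ∑ a : Fin m → ZMod p, if g = a then f a else 0 := by
    intro g
    rw [Finset.sum_ite_eq univ g f, if_pos (mem_univ _)]
  have hfe : ∀ (g a : Fin m → ZMod p),
      (if g = a then f a else 0) = f a * ∏ i, (if g i = a i then (1:ℝ) else 0) := by
    intro g a
    by_cases h : g = a
    · subst h; simp
    · rw [if_neg h]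
      obtain ⟨i, hi⟩ : ∃ i, g i ≠ a i := by
        by_contra hc; push_neg at hc; exact h (funext hc)
      rw [Finset.prod_eq_zero (mem_univ i) (by simp [hi]), mul_zero]
  have step1 : ∑ σ : Fin m → Equiv.Perm (ZMod p),
      (if (∑ i, σ i (x i)) = 0 then (1 : ℝ) else 0) *
      (if (∑ i, σ i (x' i)) = 0 then (1 : ℝ) else 0)
      = ∑ a : Fin m → ZMod p, ∑ b : Fin m → ZMod p, (f a * f b) *
          ∏ i, (Fc p (x i) (x' i) (a i) (b i)) := by
    have hterm : ∀ σ : Fin m → Equiv.Perm (ZMod p),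
        (if (∑ i, σ i (x i)) = 0 then (1 : ℝ) else 0) *
        (if (∑ i, σ i (x' i)) = 0 then (1 : ℝ) else 0)
        = ∑ a : Fin m → ZMod p, ∑ b : Fin m → ZMod p, (f a * f b) *
            ∏ i, ((if σ i (x i) = a i then (1:ℝ) else 0) * (if σ i (x' i) = b i then (1:ℝ) else 0)) := by
      intro σ
      rw [hind (fun i => σ i (x i)), hind (fun i => σ i (x' i)), Finset.sum_mul_sum]
      apply Finset.sum_congr rfl; intro a _
      apply Finset.sum_congr rfl; intro b _
      rw [hfe, hfe, Finset.prod_mul_distrib]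
      ring
    rw [Finset.sum_congr rfl (fun σ _ => hterm σ), Finset.sum_comm]
    apply Finset.sum_congr rfl; intro a _
    rw [Finset.sum_comm]
    apply Finset.sum_congr rfl; intro b _
    rw [← Finset.mul_sum]
    congr 1
    have hswap : ∑ σ : Fin m → Equiv.Perm (ZMod p),
        ∏ i, ((if σ i (x i) = a i then (1:ℝ) else 0) * (if σ i (x' i) = b i then (1:ℝ) else 0))
        = ∏ i, ∑ τ : Equiv.Perm (ZMod p),
            ((if τ (x i) = a i then (1:ℝ) else 0) * (if τ (x' i) = b i then (1:ℝ) else 0)) := by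
      rw [Finset.prod_univ_sum (fun _ => (univ : Finset (Equiv.Perm (ZMod p))))
        (fun i τ => (if τ (x i) = a i then (1:ℝ) else 0) * (if τ (x' i) = b i then (1:ℝ) else 0)),
        Fintype.piFinset_univ]
    rw [hswap]
    exact Finset.prod_congr rfl (fun i _ => colsum hp (x i) (x' i) (a i) (b i))
  rw [step1]
  -- change of variables b = a + d
  have step2 : ∀ a : Fin m → ZMod p,
      (∑ b : Fin m → ZMod p, (f a * f b) * ∏ i, (Fc p (x i) (x' i) (a i) (b i)))
      = ∑ d : Fin m → ZMod p, (f a * f (a + d)) * ∏ i, (Wr p (x i) (x' i) (d i)) := by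
    intro a
    rw [← Fintype.sum_equiv (Equiv.addLeft a)
      (fun d => (f a * f (a + d)) * ∏ i, (Wr p (x i) (x' i) (d i)))
      (fun b => (f a * f b) * ∏ i, (Fc p (x i) (x' i) (a i) (b i))) ?_]
    intro d
    simp only [Equiv.coe_addLeft]
    congr 1
    apply Finset.prod_congr rfl
    intro i _
    symm
    show Fc p (x i) (x' i) (a i) ((a + d) i) = Wr p (x i) (x' i) (d i)
    have : (a + d) i = a i + d i := rfl
    rw [this, Fc, Wr]
    have hiff : (a i = a i + d i) ↔ (d i = 0) := by
      constructor
      · intro h; have := left_eq_add.1 h; exact this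
      · intro h; rw [h, add_zero]
    by_cases hxi : x i = x' i
    · rw [if_pos hxi, if_pos hxi, if_congr hiff rfl rfl]
    · rw [if_neg hxi, if_neg hxi, if_congr hiff rfl rfl]
  rw [Finset.sum_congr rfl (fun a _ => step2 a)]
  -- simplify f a * f (a+d) = f a * [∑ d = 0]
  have step3 : ∀ a d : Fin m → ZMod p,
      f a * f (a + d) = f a * (if (∑ i, d i) = 0 then (1:ℝ) else 0) := by
    intro a d
    rw [hf]
    simp only
    by_cases ha : (∑ i, a i) = 0
    · have hsum : ∑ i, (a + d) i = ∑ i, a i + ∑ i, d i := Finset.sum_add_distrib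
      rw [if_pos ha, hsum, ha, zero_add]
    · rw [if_neg ha, zero_mul, zero_mul]
  have step4 : ∑ a : Fin m → ZMod p, ∑ d : Fin m → ZMod p,
      (f a * f (a + d)) * ∏ i, (Wr p (x i) (x' i) (d i))
      = (∑ a : Fin m → ZMod p, f a) * (∑ d : Fin m → ZMod p,
          (if (∑ i, d i) = 0 then (1:ℝ) else 0) * ∏ i, (Wr p (x i) (x' i) (d i))) := by
    rw [Finset.sum_mul]
    apply Finset.sum_congr rfl; intro a _
    rw [Finset.mul_sum]
    apply Finset.sum_congr rfl; intro d _
    rw [step3 a d]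
    ring
  rw [step4, Tzero hp m x x', hf]
  rw [csum hm]
/-- projection kernel entry lemma -/
lemma p1sq {p : ℕ} [NeZero p] (hp : 2 ≤ p) (a b : ZMod p) :
    ∑ c : ZMod p, (((if a = c then (1:ℝ) else 0) - 1/(p:ℝ)) * ((if c = b then (1:ℝ) else 0) - 1/(p:ℝ)))
      = (if a = b then (1:ℝ) else 0) - 1/(p:ℝ) := by
  have hp0 : (p:ℝ) ≠ 0 := by positivity
  have e1 : ∀ c : ZMod p,
      (((if a = c then (1:ℝ) else 0) - 1/(p:ℝ)) * ((if c = b then (1:ℝ) else 0) - 1/(p:ℝ)))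
      = (if a = c then (1:ℝ) else 0) * (if c = b then (1:ℝ) else 0)
        - (if a = c then (1:ℝ) else 0) * (1/(p:ℝ))
        - (if c = b then (1:ℝ) else 0) * (1/(p:ℝ)) + (1/(p:ℝ)) * (1/(p:ℝ)) := by
    intro c; ring
  rw [Finset.sum_congr rfl (fun c _ => e1 c)]
  have e3 : ∀ c : ZMod p, (if a = c then (1:ℝ) else 0) * (if c = b then (1:ℝ) else 0)
      = if a = c then (if c = b then (1:ℝ) else 0) else 0 := by
    intro c; by_cases h : a = c <;> simp [h]
  rw [Finset.sum_add_distrib, Finset.sum_sub_distrib, Finset.sum_sub_distrib]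
  rw [Finset.sum_congr rfl (fun c _ => e3 c)]
  rw [Finset.sum_ite_eq univ a (fun c => if c = b then (1:ℝ) else 0), if_pos (mem_univ _)]
  rw [← Finset.sum_mul, ← Finset.sum_mul]
  rw [Finset.sum_ite_eq univ a (fun _ => (1:ℝ)), if_pos (mem_univ _)]
  rw [Finset.sum_ite_eq' univ b (fun _ => (1:ℝ)), if_pos (mem_univ _)]
  rw [Finset.sum_const, Finset.card_univ, ZMod.card, nsmul_eq_mul]
  field_simp
  ring

noncomputable def Rmat (p m : ℕ) : Matrix (Fin m → ZMod p) (Fin m → ZMod p) ℝ :=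
  Matrix.of fun x x' => ∏ i, ((if x i = x' i then (1:ℝ) else 0) - 1/(p:ℝ))

lemma Rmat_apply (p m : ℕ) (x x' : Fin m → ZMod p) :
    Rmat p m x x' = ∏ i, ((if x i = x' i then (1:ℝ) else 0) - 1/(p:ℝ)) := rfl

lemma Rmat_sym (p m : ℕ) : (Rmat p m)ᵀ = Rmat p m := by
  ext x x'
  simp only [Matrix.transpose_apply, Rmat_apply]
  apply Finset.prod_congr rfl
  intro i _
  congr 1
  simp [eq_comm]

lemma Rmat_idem {p : ℕ} [NeZero p] (hp : 2 ≤ p) (m : ℕ) : Rmat p m * Rmat p m = Rmat p m := by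
  ext x x'
  rw [Matrix.mul_apply]
  have e1 : ∀ y : Fin m → ZMod p, Rmat p m x y * Rmat p m y x'
      = ∏ i, (((if x i = y i then (1:ℝ) else 0) - 1/(p:ℝ))
          * ((if y i = x' i then (1:ℝ) else 0) - 1/(p:ℝ))) := by
    intro y
    rw [Rmat_apply, Rmat_apply, Finset.prod_mul_distrib]
  rw [Finset.sum_congr rfl (fun y _ => e1 y)]
  have e2 := Finset.prod_univ_sum (fun _ : Fin m => (univ : Finset (ZMod p)))
    (fun i c => (((if x i = c then (1:ℝ) else 0) - 1/(p:ℝ))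
      * ((if c = x' i then (1:ℝ) else 0) - 1/(p:ℝ))))
  rw [Fintype.piFinset_univ] at e2
  rw [← e2, Rmat_apply]
  exact Finset.prod_congr rfl (fun i _ => p1sq hp (x i) (x' i))

lemma Rmat_quad {p : ℕ} [NeZero p] (hp : 2 ≤ p) (m : ℕ) (w : (Fin m → ZMod p) → ℝ) :
    0 ≤ w ⬝ᵥ (Rmat p m *ᵥ w) ∧ w ⬝ᵥ (Rmat p m *ᵥ w) ≤ w ⬝ᵥ w := by
  set z := Rmat p m *ᵥ w with hz
  have key : w ⬝ᵥ z = z ⬝ᵥ z := by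
    have h0 : Rmat p m *ᵥ z = z := by
      rw [hz, Matrix.mulVec_mulVec, Rmat_idem hp m]
    have hWR : w ᵥ* Rmat p m = z := by
      nth_rewrite 1 [← Rmat_sym p m]
      rw [Matrix.vecMul_transpose]
    calc w ⬝ᵥ z = w ⬝ᵥ (Rmat p m *ᵥ z) := by rw [h0]
      _ = (w ᵥ* Rmat p m) ⬝ᵥ z := Matrix.dotProduct_mulVec _ _ _
      _ = z ⬝ᵥ z := by rw [hWR]
  have hzz : z ⬝ᵥ z = ∑ y, z y * z y := rfl
  have hnn : 0 ≤ z ⬝ᵥ z := by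
    rw [hzz]; exact Finset.sum_nonneg (fun y _ => mul_self_nonneg _)
  refine ⟨by rw [key]; exact hnn, ?_⟩
  have cs := Finset.sum_mul_sq_le_sq_mul_sq univ w z
  have h1 : (∑ y, w y * z y) = z ⬝ᵥ z := key
  have h3 : (∑ y, z y ^ 2) = z ⬝ᵥ z := by
    rw [hzz]; exact Finset.sum_congr rfl (fun y _ => pow_two (z y))
  have h4 : (∑ y, w y ^ 2) = w ⬝ᵥ w := by
    have : w ⬝ᵥ w = ∑ y, w y * w y := rfl
    rw [this]; exact Finset.sum_congr rfl (fun y _ => pow_two (w y))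
  rw [h1, h3, h4] at cs
  have hwn : 0 ≤ w ⬝ᵥ w := Finset.sum_nonneg (fun y _ => mul_self_nonneg _)
  rw [key]
  nlinarith [cs, hnn, hwn]

lemma prodsplit {p m : ℕ} (c1 c2 : ℝ) (x x' : Fin m → ZMod p) :
    ∏ i, (if x i = x' i then c1 else c2)
      = c1 ^ (m - (∑ i, if x i = x' i then 0 else 1))
          * c2 ^ (∑ i, if x i = x' i then 0 else 1) := by
  classical
  rw [Finset.prod_ite (fun _ => c1) (fun _ => c2), Finset.prod_const, Finset.prod_const]
  have hk2 : (univ.filter fun i => ¬ x i = x' i).card = ∑ i, if x i = x' i then 0 else 1 := by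
    rw [Finset.card_filter]
    apply Finset.sum_congr rfl
    intro i _
    by_cases h : x i = x' i <;> simp [h]
  have hk1 : (univ.filter fun i => x i = x' i).card
      = m - (∑ i, if x i = x' i then 0 else 1) := by
    have := Finset.card_filter_add_card_filter_not
      (s := (univ : Finset (Fin m))) (p := fun i => x i = x' i)
    rw [Finset.card_univ, Fintype.card_fin] at this
    omega
  rw [hk1, hk2]

lemma sum_ite_le {p m : ℕ} (x x' : Fin m → ZMod p) :
    (∑ i, if x i = x' i then 0 else 1) ≤ m := by
  calc (∑ i : Fin m, if x i = x' i then 0 else 1)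
      ≤ ∑ i : Fin m, 1 := Finset.sum_le_sum (fun i _ => by by_cases h : x i = x' i <;> simp [h])
    _ = m := by simp

lemma phiForm {p : ℕ} (hp : 2 ≤ p) (j k : ℕ) :
    phi p k / (p:ℝ) = 1/(p:ℝ)^2
      + (((p:ℝ)-1)/(p:ℝ)^2 * ((p:ℝ)/((p:ℝ)-1))^(j+k))
          * ((1 - 1/(p:ℝ))^j * (-(1/(p:ℝ)))^k) := by
  have hp0 : (p:ℝ) ≠ 0 := by positivity
  have hq0 : (p:ℝ) - 1 ≠ 0 := by
    have : (2:ℝ) ≤ (p:ℝ) := by exact_mod_cast hp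
    nlinarith
  have h1 : (1 - 1/(p:ℝ)) = ((p:ℝ)-1)/(p:ℝ) := by field_simp
  have h2 : (-(1/(p:ℝ)))^k = (-1)^k * (1/(p:ℝ))^k := by
    rw [← neg_one_mul, mul_pow]
  simp only [phi, pow_add, div_pow, h1, h2, one_pow]
  field_simp

lemma SigVal {p m : ℕ} [NeZero p] (hp : 2 ≤ p) (hm : 1 ≤ m) (x x' : Fin m → ZMod p) :
    (∑ σ : Fin m → Equiv.Perm (ZMod p),
        (if (∑ i, σ i (x i)) = 0 then (1 : ℝ) else 0) *
        (if (∑ i, σ i (x' i)) = 0 then (1 : ℝ) else 0)) /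
      (Fintype.card (Fin m → Equiv.Perm (ZMod p)) : ℝ)
    = ((p:ℝ)^m/(p:ℝ)^2) * (1/(p:ℝ)^m)
      + (((p:ℝ)-1)/(p:ℝ)^2 * ((p:ℝ)/((p:ℝ)-1))^m) * Rmat p m x x' := by
  have hp0 : (p:ℝ) ≠ 0 := by positivity
  have hppos : (0:ℝ) < (p:ℝ) := by positivity
  set F : ℝ := (Nat.factorial (p-1) : ℝ) with hF
  have hFpos : 0 < F := by
    rw [hF]; exact_mod_cast Nat.factorial_pos (p-1)
  have hcard : (Fintype.card (Fin m → Equiv.Perm (ZMod p)) : ℝ) = (p:ℝ)^m * F^m := by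
    have hc1 : Fintype.card (Fin m → Equiv.Perm (ZMod p))
        = (Fintype.card (Equiv.Perm (ZMod p)))^m := by
      rw [Fintype.card_pi, Finset.prod_const, Finset.card_univ, Fintype.card_fin]
    have hc2 : Fintype.card (Equiv.Perm (ZMod p)) = Nat.factorial p := by
      rw [Fintype.card_perm, ZMod.card]
    have hc3 : Nat.factorial p = p * Nat.factorial (p-1) :=
      (Nat.mul_factorial_pred (by omega)).symm
    rw [hc1, hc2, hc3]
    push_cast
    rw [mul_pow]
  rw [numerator hp hm x x', hcard]
  set k : ℕ := ∑ i, if x i = x' i then 0 else 1 with hkdef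
  have hk : k ≤ m := sum_ite_le x x'
  -- left side equals phi p k / p
  have hFm : F^m ≠ 0 := by positivity
  have hpm : (p:ℝ)^m ≠ 0 := by positivity
  have hpow : (p:ℝ)^(m-1) * (p:ℝ) = (p:ℝ)^m := by
    rw [← pow_succ]; congr 1; omega
  have hl : ((p:ℝ)^(m-1) * (F^m * phi p k)) / ((p:ℝ)^m * F^m) = phi p k / (p:ℝ) := by
    rw [div_eq_div_iff (by positivity) hp0]
    linear_combination (F^m * phi p k) * hpow
  rw [hl]
  -- right side via prodsplit and phiForm
  have hR : Rmat p m x x' = (1 - 1/(p:ℝ))^(m-k) * (-(1/(p:ℝ)))^k := by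
    rw [Rmat_apply]
    have : ∀ i, ((if x i = x' i then (1:ℝ) else 0) - 1/(p:ℝ))
        = if x i = x' i then (1 - 1/(p:ℝ)) else (-(1/(p:ℝ))) := by
      intro i; by_cases h : x i = x' i <;> simp [h]
    rw [Finset.prod_congr rfl (fun i _ => this i), prodsplit]
  have hfirst : ((p:ℝ)^m/(p:ℝ)^2) * (1/(p:ℝ)^m) = 1/(p:ℝ)^2 := by
    field_simp
  rw [hR, hfirst]
  set j := m - k with hjdef
  have hjk : m = j + k := by omega
  rw [hjk]
  exact phiForm hp j k

/-- The sum of the `n` largest eigenvalues of the second-moment matrix of the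
modular-addition function class (uniform over tuples of permutations) is at most
`p^{m−2} + (n/p)·exp((m−1)/(p−1))`. Formulated as: the eigenvalue sum over any set
of at most `n` indices is bounded. -/
theorem stmt11 (p m n : ℕ) [NeZero p] (hp : 2 ≤ p) (hm : 1 ≤ m) (hmp : m < p)
    (hn : 1 ≤ n)
    (Sig : Matrix (Fin m → ZMod p) (Fin m → ZMod p) ℝ)
    (hdef : ∀ x x', Sig x x' =
      (∑ σ : Fin m → Equiv.Perm (ZMod p),
          (if (∑ i, σ i (x i)) = 0 then (1 : ℝ) else 0) *
          (if (∑ i, σ i (x' i)) = 0 then (1 : ℝ) else 0)) /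
        (Fintype.card (Fin m → Equiv.Perm (ZMod p)) : ℝ))
    (hherm : Sig.IsHermitian)
    (t : Finset (Fin m → ZMod p)) (ht : t.card ≤ n) :
    ∑ x ∈ t, hherm.eigenvalues x ≤
      (p : ℝ) ^ ((m : ℝ) - 2) + ((n : ℝ) / p) * Real.exp (((m : ℝ) - 1) / ((p : ℝ) - 1)) := by
  classical
  have hp0 : (p:ℝ) ≠ 0 := by positivity
  have hppos : (0:ℝ) < (p:ℝ) := by positivity
  have hq : (0:ℝ) < (p:ℝ) - 1 := by
    have : (2:ℝ) ≤ (p:ℝ) := by exact_mod_cast hp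
    linarith
  set A : ℝ := (p:ℝ)^m/(p:ℝ)^2 with hA
  set B : ℝ := ((p:ℝ)-1)/(p:ℝ)^2 * ((p:ℝ)/((p:ℝ)-1))^m with hB
  have hAnn : 0 ≤ A := by positivity
  have hBnn : 0 ≤ B := by positivity
  set Qm : Matrix (Fin m → ZMod p) (Fin m → ZMod p) ℝ :=
    Matrix.of (fun _ _ => 1/(p:ℝ)^m) with hQm
  have hSig : Sig = A • Qm + B • Rmat p m := by
    ext x x'
    rw [hdef x x']
    rw [SigVal hp hm x x']
    simp [Matrix.add_apply, Matrix.smul_apply, smul_eq_mul, hQm]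
    rw [hA, hB]
  set v := hherm.eigenvectorBasis with hv
  -- the constant unit vector
  set P : ℝ := (p:ℝ)^m with hP
  have hPpos : 0 < P := by positivity
  set u : EuclideanSpace ℝ (Fin m → ZMod p) := WithLp.toLp 2 (fun _ => 1/Real.sqrt P) with hu
  have hcardN : (Fintype.card (Fin m → ZMod p) : ℝ) = P := by
    rw [hP]
    rw [Fintype.card_pi, Finset.prod_const, Finset.card_univ, Fintype.card_fin, ZMod.card]
    push_cast
    ring
  have hsq : (1/Real.sqrt P) * (1/Real.sqrt P) = 1/P := by
    rw [div_mul_div_comm, one_mul, Real.mul_self_sqrt hPpos.le]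
  -- eigenvalue bound pointwise
  have key : ∀ x : Fin m → ZMod p,
      hherm.eigenvalues x ≤ A * ‖(inner ℝ (v x) u)‖^2 + B := by
    intro x
    set w : (Fin m → ZMod p) → ℝ := ⇑(v x) with hw
    have hmv : Sig *ᵥ w = hherm.eigenvalues x • w := hherm.mulVec_eigenvectorBasis x
    have hunit : w ⬝ᵥ w = 1 := by
      have h1 : (inner ℝ (v x) (v x)) = 1 := by
        rw [orthonormal_iff_ite.1 v.orthonormal x x, if_pos rfl]
      rw [PiLp.inner_apply] at h1
      simpa [dotProduct, hw, pow_two] using h1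
    have heig : hherm.eigenvalues x = w ⬝ᵥ (Sig *ᵥ w) := by
      rw [hmv, dotProduct_smul, smul_eq_mul, hunit, mul_one]
    have hdec : w ⬝ᵥ (Sig *ᵥ w)
        = A * (w ⬝ᵥ (Qm *ᵥ w)) + B * (w ⬝ᵥ (Rmat p m *ᵥ w)) := by
      rw [hSig, Matrix.add_mulVec, Matrix.smul_mulVec, Matrix.smul_mulVec,
        dotProduct_add, dotProduct_smul, dotProduct_smul,
        smul_eq_mul, smul_eq_mul]
    have hQ : w ⬝ᵥ (Qm *ᵥ w) = ‖(inner ℝ (v x) u)‖^2 := by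
      have h1 : (inner ℝ (v x) u) = (∑ y, w y) * (1/Real.sqrt P) := by
        rw [PiLp.inner_apply]
        simp only [RCLike.inner_apply, conj_trivial]
        rw [Finset.sum_mul]
        apply Finset.sum_congr rfl
        intro y _
        exact mul_comm _ _
      have h2 : w ⬝ᵥ (Qm *ᵥ w) = (∑ y, w y) * (∑ y, w y) * (1/P) := by
        have hmulvec : ∀ y, (Qm *ᵥ w) y = (1/P) * ∑ z, w z := by
          intro y
          simp only [Matrix.mulVec, dotProduct, hQm, Matrix.of_apply, hP]
          rw [← Finset.mul_sum]
        have : w ⬝ᵥ (Qm *ᵥ w) = ∑ y, w y * ((1/P) * ∑ z, w z) := by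
          apply Finset.sum_congr rfl
          intro y _
          rw [hmulvec y]
        rw [this, ← Finset.sum_mul]
        ring
      rw [h2, Real.norm_eq_abs, sq_abs, h1, mul_pow, pow_two, pow_two, hsq]
    have hr : w ⬝ᵥ (Rmat p m *ᵥ w) ≤ 1 := by
      have := (Rmat_quad hp m w).2
      rwa [hunit] at this
    calc hherm.eigenvalues x = A * (w ⬝ᵥ (Qm *ᵥ w)) + B * (w ⬝ᵥ (Rmat p m *ᵥ w)) := by
          rw [heig, hdec]
      _ ≤ A * (w ⬝ᵥ (Qm *ᵥ w)) + B * 1 :=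
          add_le_add le_rfl (mul_le_mul_of_nonneg_left hr hBnn)
      _ = A * ‖(inner ℝ (v x) u)‖^2 + B := by rw [hQ, mul_one]
  -- Bessel inequality
  have hnormu : ‖u‖^2 = 1 := by
    have h1 : (inner ℝ u u) = 1 := by
      rw [PiLp.inner_apply]
      simp only [RCLike.inner_apply, conj_trivial]
      have : ∀ y : Fin m → ZMod p, u y * u y = 1/P := fun _ => hsq
      rw [Finset.sum_congr rfl (fun y _ => this y), Finset.sum_const, Finset.card_univ,
        nsmul_eq_mul]
      rw [show ((Fintype.card (Fin m → ZMod p) : ℝ)) = P from hcardN]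
      field_simp
    rw [← real_inner_self_eq_norm_sq, h1]
  have hbes : ∑ x ∈ t, ‖(inner ℝ (v x) u)‖^2 ≤ 1 := by
    have h := v.orthonormal.sum_inner_products_le (s := t) u
    rwa [hnormu] at h
  -- assemble
  have hsum : ∑ x ∈ t, hherm.eigenvalues x
      ≤ A * (∑ x ∈ t, ‖(inner ℝ (v x) u)‖^2) + B * t.card := by
    calc ∑ x ∈ t, hherm.eigenvalues x
        ≤ ∑ x ∈ t, (A * ‖(inner ℝ (v x) u)‖^2 + B) :=
          Finset.sum_le_sum (fun x _ => key x)
      _ = A * (∑ x ∈ t, ‖(inner ℝ (v x) u)‖^2) + B * t.card := by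
          rw [Finset.sum_add_distrib, ← Finset.mul_sum, Finset.sum_const, nsmul_eq_mul]
          ring
  have hstep2 : A * (∑ x ∈ t, ‖(inner ℝ (v x) u)‖^2) + B * t.card ≤ A + B * n := by
    have h1 : A * (∑ x ∈ t, ‖(inner ℝ (v x) u)‖^2) ≤ A * 1 :=
      mul_le_mul_of_nonneg_left hbes hAnn
    have h2 : B * t.card ≤ B * n := by
      apply mul_le_mul_of_nonneg_left _ hBnn
      exact_mod_cast ht
    calc A * (∑ x ∈ t, ‖(inner ℝ (v x) u)‖^2) + B * t.card
        ≤ A * 1 + B * n := add_le_add h1 h2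
      _ = A + B * n := by ring
  -- numeric bounds
  have hAr : (p : ℝ) ^ ((m : ℝ) - 2) = A := by
    have hc : ((m:ℝ) - 2) = ((m:ℕ):ℝ) - ((2:ℕ):ℝ) := by norm_num
    rw [hc, Real.rpow_sub hppos, Real.rpow_natCast, Real.rpow_natCast]
  have hBe : B ≤ (1/(p:ℝ)) * Real.exp (((m:ℝ)-1)/((p:ℝ)-1)) := by
    have hq0 : ((p:ℝ)-1) ≠ 0 := ne_of_gt hq
    have hm1 : m - 1 + 1 = m := by omega
    have hBeq : B = (1/(p:ℝ)) * ((p:ℝ)/((p:ℝ)-1))^(m-1) := by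
      have hps : ((p:ℝ)/((p:ℝ)-1))^m = ((p:ℝ)/((p:ℝ)-1))^(m-1) * ((p:ℝ)/((p:ℝ)-1)) := by
        rw [← pow_succ, hm1]
      rw [hB, hps]
      field_simp
    have hstep : (p:ℝ)/((p:ℝ)-1) ≤ Real.exp (1/((p:ℝ)-1)) := by
      have h := Real.add_one_le_exp (1/((p:ℝ)-1))
      have heq : (p:ℝ)/((p:ℝ)-1) = 1/((p:ℝ)-1) + 1 := by rw [div_add_one hq0]; congr 1; ring
      rw [heq]; exact h
    have hpow : ((p:ℝ)/((p:ℝ)-1))^(m-1) ≤ (Real.exp (1/((p:ℝ)-1)))^(m-1) :=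
      pow_le_pow_left₀ (by positivity) hstep (m-1)
    have hexp : (Real.exp (1/((p:ℝ)-1)))^(m-1) = Real.exp (((m:ℝ)-1)/((p:ℝ)-1)) := by
      rw [← Real.exp_nat_mul]
      congr 1
      rw [Nat.cast_sub hm, Nat.cast_one, mul_one_div]
    rw [hBeq, ← hexp]
    exact mul_le_mul_of_nonneg_left hpow (by positivity)
  have hfinal : A + B * n
      ≤ (p : ℝ) ^ ((m : ℝ) - 2) + ((n : ℝ) / p) * Real.exp (((m : ℝ) - 1) / ((p : ℝ) - 1)) := by
    rw [hAr]
    apply add_le_add le_rfl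
    have hn0 : (0:ℝ) ≤ (n:ℝ) := by positivity
    calc B * (n:ℝ) ≤ ((1/(p:ℝ)) * Real.exp (((m:ℝ)-1)/((p:ℝ)-1))) * (n:ℝ) :=
          mul_le_mul_of_nonneg_right hBe hn0
      _ = ((n : ℝ) / p) * Real.exp (((m : ℝ) - 1) / ((p : ℝ) - 1)) := by ring
  linarith [hsum, hstep2, hfinal]
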